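/- arXiv:1705.03638 — 2 statements merged into one kernel-verified Lean document; each statement's English description precedes it below -/
import Mathlib

section
/- Define P_S for a rooted tree by P_η(n) = 1 for the trivial tree, and P_S(n) = Σ_{k=0}^{n} ∏_{i=1}^{m} P_{S_i}(k) when S = C_m[S_1,…,S_m]. Then for each tree S, the function P_S : ℕ → ℕ agrees with a polynomial over ℚ of degree |S| (the number of vertices of S) with leading coefficient 1/S!, where S! = ∏_{v ∈ S} |S_v| and S_v is the subtree rooted at v. -/
/-- Rooted trees: `eta` is the trivial tree (a single edge, no vertices), and
`node [S₁,…,Sₘ]` is the tree `C_m[S₁,…,Sₘ]` obtained by grafting `S₁,…,Sₘ` onto a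
corolla with a new root vertex. -/
inductive RTree : Type
  | eta : RTree
  | node : List RTree → RTree

namespace RTree

/-- `|S|`, the number of vertices of the tree `S`. -/
def size : RTree → ℕ
  | .eta => 0
  | .node ss => 1 + (ss.attach.map (fun s => size s.1)).sum
decreasing_by
  simp_wf
  have := List.sizeOf_lt_of_mem s.2
  omega

/-- The tree factorial `S! = ∏_v |S_v|`, the product over all vertices `v` of `S` of the
number of vertices of the maximal subtree `S_v` rooted at `v`. -/
def tfact : RTree → ℕ
  | .eta => 1
  | .node ss => size (.node ss) * (ss.attach.map (fun s => tfact s.1)).prod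
decreasing_by
  simp_wf
  have := List.sizeOf_lt_of_mem s.2
  omega

/-- The height of a tree: the number of vertices on a longest branch, so `ht(η) = 0` and
`ht(C_m[S₁,…,Sₘ]) = 1 + maxᵢ ht(Sᵢ)`. -/
def ht : RTree → ℕ
  | .eta => 0
  | .node ss => 1 + (ss.attach.map (fun s => ht s.1)).foldr max 0
decreasing_by
  simp_wf
  have := List.sizeOf_lt_of_mem s.2
  omega

/-- The number of shuffles of two trees, defined recursively by `sh(S,η) = sh(η,T) = 1`
and `sh(C_m[S₁,…,Sₘ], C_n[T₁,…,Tₙ]) = ∏ᵢ sh(Sᵢ,T) + ∏ⱼ sh(S,Tⱼ)`. -/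
def sh : RTree → RTree → ℕ
  | .eta, _ => 1
  | .node _, .eta => 1
  | .node ss, .node ts =>
      (ss.attach.map (fun s => sh s.1 (.node ts))).prod +
      (ts.attach.map (fun t => sh (.node ss) t.1)).prod
termination_by S T => sizeOf S + sizeOf T
decreasing_by
  · simp_wf
    have := List.sizeOf_lt_of_mem s.2
    omega
  · simp_wf
    have := List.sizeOf_lt_of_mem t.2
    omega

/-- `P S n = sh(S, Lₙ)`, the number of shuffles of `S` with the linear tree with `n`
vertices: `P_η(n) = 1` and `P_{C_m[S₁,…,Sₘ]}(n) = ∑_{k=0}^{n} ∏ᵢ P_{Sᵢ}(k)`. -/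
def P : RTree → ℕ → ℕ
  | .eta, _ => 1
  | .node ss, n => ∑ k ∈ Finset.range (n + 1), (ss.attach.map (fun s => P s.1 k)).prod
termination_by S n => sizeOf S
decreasing_by
  simp_wf
  have := List.sizeOf_lt_of_mem s.2
  omega

end RTree

open Polynomial Finset

lemma sum_poly : ∀ d : ℕ, ∀ q : Polynomial ℚ, q.natDegree ≤ d →
    ∃ p : Polynomial ℚ, p.natDegree ≤ d + 1 ∧ p.coeff (d+1) = q.coeff d / (d+1) ∧
      ∀ n : ℕ, p.eval (n : ℚ) = ∑ k ∈ Finset.range (n+1), q.eval (k : ℚ) := by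
  intro d
  induction d with
  | zero =>
    intro q hq
    refine ⟨C (q.coeff 0) * (X + 1), by compute_degree, ?_, ?_⟩
    · simp [mul_add, coeff_C_mul, coeff_X]
    · intro n
      have hq' : q = C (q.coeff 0) := Polynomial.eq_C_of_natDegree_le_zero hq
      rw [hq']
      simp [Finset.sum_const]
      ring
  | succ d ih =>
    intro q hq
    set c : ℚ := q.coeff (d+1) with hc
    set c' : ℚ := c / (d+2) with hc'
    set r : Polynomial ℚ := q - C c' * X^(d+2) + C c' * (X + C (-1))^(d+2) with hr
    have hrd : r.natDegree ≤ d := by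
      rw [natDegree_le_iff_coeff_eq_zero]
      intro m hm
      have hco : r.coeff m = q.coeff m - c' * (X^(d+2) : Polynomial ℚ).coeff m
          + c' * ((-1:ℚ)^(d+2-m) * ((d+2).choose m : ℚ)) := by
        rw [hr]
        simp only [coeff_add, coeff_sub, coeff_C_mul, coeff_X_add_C_pow]
      rcases lt_trichotomy m (d+2) with h2 | h2 | h2
      · -- m = d + 1
        have hm1 : m = d + 1 := by omega
        subst hm1
        rw [hco]
        have hd2 : (d + 2) - (d+1) = 1 := by omega
        rw [hd2]
        simp only [coeff_X_pow]
        rw [if_neg (by omega)]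
        have hch : ((d+2).choose (d+1) : ℚ) = (d+2 : ℚ) := by
          rw [Nat.choose_succ_self_right]
          push_cast; ring
        rw [hch, ← hc]
        have h2ne : ((d:ℚ)+2) ≠ 0 := by positivity
        rw [hc']
        field_simp
        ring
      · subst h2
        rw [hco]
        have hq0 : q.coeff (d+2) = 0 := coeff_eq_zero_of_natDegree_lt (by omega)
        simp [hq0]
      · rw [hco]
        have hq0 : q.coeff m = 0 := coeff_eq_zero_of_natDegree_lt (by omega)
        have hch : ((d+2).choose m : ℚ) = 0 := by
          rw [Nat.choose_eq_zero_of_lt h2]; simp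
        simp [hq0, hch, coeff_X_pow]
        intro h; omega
    obtain ⟨p', hp'd, _, hp'e⟩ := ih r hrd
    set K : ℚ := c' * (-1:ℚ)^(d+2) with hK
    refine ⟨C c' * X^(d+2) - C K + p', ?_, ?_, ?_⟩
    · have hA : (C c' * X^(d+2) - C K).natDegree ≤ d + 2 := by compute_degree
      exact le_trans (natDegree_add_le _ _) (max_le hA (hp'd.trans (by omega)))
    · have h1 : p'.coeff (d+2) = 0 := coeff_eq_zero_of_natDegree_lt (by omega)
      simp [coeff_C_mul, coeff_X_pow, coeff_C, h1, hc']
      ring_nf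
    · intro n
      have tel : ∑ k ∈ Finset.range (n+1), (c'*(k:ℚ)^(d+2) - c'*((k:ℚ)-1)^(d+2))
          = c'*(n:ℚ)^(d+2) - c'*(-1:ℚ)^(d+2) := by
        have h := Finset.sum_range_sub (fun i : ℕ => c' * ((i:ℚ)-1)^(d+2)) (n+1)
        have heq : ∀ k ∈ Finset.range (n+1),
            (c'*(k:ℚ)^(d+2) - c'*((k:ℚ)-1)^(d+2))
            = c' * (((k+1:ℕ):ℚ)-1)^(d+2) - c' * ((k:ℚ)-1)^(d+2) := by
          intro k _; push_cast; ring_nf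
        rw [Finset.sum_congr rfl heq, h]
        push_cast; ring_nf
      have hre : ∀ k : ℕ, r.eval (k:ℚ)
          = q.eval (k:ℚ) - (c'*(k:ℚ)^(d+2) - c'*((k:ℚ)-1)^(d+2)) := by
        intro k; rw [hr]; simp; ring
      have hsum : ∑ k ∈ Finset.range (n+1), r.eval (k:ℚ)
          = (∑ k ∈ Finset.range (n+1), q.eval (k:ℚ))
            - (c'*(n:ℚ)^(d+2) - c'*(-1:ℚ)^(d+2)) := by
        rw [Finset.sum_congr rfl (fun k _ => hre k), Finset.sum_sub_distrib, tel]
      simp only [eval_add, eval_sub, eval_mul, eval_C, eval_pow, eval_X, hp'e, hsum, hK]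
      ring

open Polynomial in
lemma sum_poly' (q : Polynomial ℚ) (D : ℕ) (hq : q.degree = (D : WithBot ℕ)) :
    ∃ p : Polynomial ℚ, p.degree = ((D + 1 : ℕ) : WithBot ℕ) ∧
      p.leadingCoeff = q.leadingCoeff / (D + 1) ∧
      ∀ n : ℕ, p.eval (n : ℚ) = ∑ k ∈ Finset.range (n+1), q.eval (k : ℚ) := by
  have hq0 : q ≠ 0 := fun h => by simp [h] at hq
  have hnd : q.natDegree = D := natDegree_eq_of_degree_eq_some hq
  obtain ⟨p, hpd, hpc, hpe⟩ := sum_poly D q hnd.le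
  have hlc : q.coeff D = q.leadingCoeff := by rw [Polynomial.leadingCoeff, hnd]
  have hD1 : ((D : ℚ) + 1) ≠ 0 := by positivity
  have hne : p.coeff (D+1) ≠ 0 := by
    rw [hpc, hlc]
    exact div_ne_zero (leadingCoeff_ne_zero.mpr hq0) hD1
  have hdeg : p.degree = ((D + 1 : ℕ) : WithBot ℕ) :=
    degree_eq_of_le_of_coeff_ne_zero (natDegree_le_iff_degree_le.mp hpd) hne
  have hndp : p.natDegree = D + 1 := natDegree_eq_of_degree_eq_some hdeg
  refine ⟨p, hdeg, ?_, hpe⟩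
  rw [Polynomial.leadingCoeff, hndp, hpc, hlc]

open Polynomial in
lemma prod_poly (l : List RTree)
    (h : ∀ s ∈ l, ∃ p : Polynomial ℚ, p.degree = ((RTree.size s : ℕ) : WithBot ℕ) ∧
      p.leadingCoeff = 1 / (RTree.tfact s : ℚ) ∧ ∀ n : ℕ, p.eval (n : ℚ) = (RTree.P s n : ℚ)) :
    ∃ q : Polynomial ℚ, q.degree = (((l.map RTree.size).sum : ℕ) : WithBot ℕ) ∧
      q.leadingCoeff = ((List.map (fun s : RTree => (RTree.tfact s : ℚ)) l).prod)⁻¹ ∧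
      ∀ n : ℕ, q.eval (n : ℚ) = (List.map (fun s : RTree => (RTree.P s n : ℚ)) l).prod := by
  induction l with
  | nil => exact ⟨1, by simp, by simp, by simp⟩
  | cons s l ih =>
    obtain ⟨p, hpd, hpl, hpe⟩ := h s (by simp)
    obtain ⟨q, hqd, hql, hqe⟩ := ih (fun t ht => h t (by simp [ht]))
    refine ⟨p * q, ?_, ?_, ?_⟩
    · rw [degree_mul, hpd, hqd, List.map_cons, List.sum_cons, Nat.cast_add]
    · rw [leadingCoeff_mul, hpl, hql, List.map_cons, List.prod_cons, mul_inv, one_div]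
    · intro n
      rw [eval_mul, hpe n, hqe n, List.map_cons, List.prod_cons]

lemma main_aux : ∀ (N : ℕ) (S : RTree), sizeOf S < N →
    ∃ p : Polynomial ℚ, p.degree = (RTree.size S : ℕ) ∧
      p.leadingCoeff = 1 / (RTree.tfact S : ℚ) ∧
      ∀ n : ℕ, p.eval (n : ℚ) = (RTree.P S n : ℚ) := by
  intro N
  induction N with
  | zero => intro S h; omega
  | succ N ih =>
    intro S hS
    match S with
    | .eta =>
      refine ⟨1, by simp [RTree.size], by simp [RTree.tfact], ?_⟩
      intro n; simp [RTree.P]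
    | .node ss =>
      have hmem : ∀ s ∈ ss, ∃ p : Polynomial ℚ,
          p.degree = ((RTree.size s : ℕ) : WithBot ℕ) ∧
          p.leadingCoeff = 1 / (RTree.tfact s : ℚ) ∧
          ∀ n : ℕ, p.eval (n : ℚ) = (RTree.P s n : ℚ) := by
        intro s hs
        have h1 := List.sizeOf_lt_of_mem hs
        have h2 : sizeOf (RTree.node ss) = 1 + sizeOf ss := by simp
        exact ih s (by omega)
      obtain ⟨q, hqd, hql, hqe⟩ := prod_poly ss hmem
      set D : ℕ := (ss.map RTree.size).sum with hD
      obtain ⟨p, hpd, hpl, hpe⟩ := sum_poly' q D hqd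
      have hattach_size : (ss.attach.map fun s => RTree.size s.1) = ss.map RTree.size := by
        simp
      have hattach_tf : (ss.attach.map fun s => RTree.tfact s.1) = ss.map RTree.tfact := by
        simp
      have hsize : RTree.size (RTree.node ss) = 1 + D := by
        rw [RTree.size, hattach_size]
      have htf : RTree.tfact (RTree.node ss) = (1 + D) * (ss.map RTree.tfact).prod := by
        rw [RTree.tfact, hattach_tf, hsize]
      refine ⟨p, ?_, ?_, ?_⟩
      · rw [hpd, hsize]
        congr 1
        omega
      · rw [hpl, hql, htf]
        have hcast : (((ss.map RTree.tfact).prod : ℕ) : ℚ)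
            = (List.map (fun s : RTree => (RTree.tfact s : ℚ)) ss).prod := by
          rw [Nat.cast_list_prod, List.map_map]
          rfl
        push_cast [← hcast]
        rw [div_eq_mul_inv, one_div, mul_inv]
        ring
      · intro n
        have hP : RTree.P (RTree.node ss) n
            = ∑ k ∈ Finset.range (n+1), (ss.map (fun s => RTree.P s k)).prod := by
          rw [RTree.P]
          refine Finset.sum_congr rfl fun k _ => ?_
          congr 1
          simp
        rw [hpe n, hP, Nat.cast_sum]
        refine Finset.sum_congr rfl fun k _ => ?_
        rw [hqe k, Nat.cast_list_prod, List.map_map]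
        rfl

/-- For each tree `S`, the shuffle-counting function `n ↦ P_S(n) = sh(S, Lₙ)` agrees
with a polynomial over `ℚ` of degree `|S|` and leading coefficient `1/S!`. -/
theorem P_is_polynomial (S : RTree) :
    ∃ p : Polynomial ℚ, p.degree = (RTree.size S : ℕ) ∧
      p.leadingCoeff = 1 / (RTree.tfact S : ℚ) ∧
      ∀ n : ℕ, p.eval (n : ℚ) = (RTree.P S n : ℚ) := by
  exact main_aux (sizeOf S + 1) S (by omega)
end

section
/- With sh defined as in the recursive definition (sh(S,η)=sh(η,T)=1 and sh(C_m[S_i], C_n[T_j]) = ∏ sh(S_i,T) + ∏ sh(S,T_j)), for any two trees S and T one has sh(S,T) ≥ C(ht(S)+ht(T), ht(S)), where ht denotes the height (number of vertices on a longest branch). -/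
lemma foldr_max_zero_or_mem (l : List ℕ) :
    l.foldr max 0 = 0 ∨ l.foldr max 0 ∈ l := by
  induction l with
  | nil => left; rfl
  | cons a l ih =>
    simp only [List.foldr_cons]
    rcases le_total a (l.foldr max 0) with h | h
    · rw [max_eq_right h]
      rcases ih with h0 | hm
      · left; exact h0
      · right; exact List.mem_cons_of_mem _ hm
    · rw [max_eq_left h]
      right; exact List.mem_cons_self

theorem choose_le_sh_aux : ∀ (S T : RTree),
    (RTree.ht S + RTree.ht T).choose (RTree.ht S) ≤ RTree.sh S T
  | .eta, T => by simp [RTree.sh, RTree.ht]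
  | .node ss, .eta => by simp [RTree.sh, RTree.ht]
  | .node ss, .node ts => by
    have hS : RTree.ht (.node ss) = 1 + (ss.attach.map (fun s => RTree.ht s.1)).foldr max 0 := by
      rw [RTree.ht]
    have hT : RTree.ht (.node ts) = 1 + (ts.attach.map (fun t => RTree.ht t.1)).foldr max 0 := by
      rw [RTree.ht]
    rw [RTree.sh]
    set M := (ss.attach.map (fun s => RTree.ht s.1)).foldr max 0 with hM
    set N := (ts.attach.map (fun t => RTree.ht t.1)).foldr max 0 with hN
    have key1 : (M + RTree.ht (.node ts)).choose M ≤
        (ss.attach.map (fun s => RTree.sh s.1 (.node ts))).prod := by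
      rcases foldr_max_zero_or_mem (ss.attach.map (fun s => RTree.ht s.1)) with h0 | hm
      · rw [← hM] at h0
        rw [h0, Nat.choose_zero_right]
        apply List.one_le_prod_of_one_le
        intro x hx
        obtain ⟨s, hs, rfl⟩ := List.mem_map.mp hx
        calc 1 ≤ (RTree.ht s.1 + RTree.ht (.node ts)).choose (RTree.ht s.1) :=
              (Nat.choose_pos (Nat.le_add_right _ _))
          _ ≤ _ := choose_le_sh_aux s.1 (.node ts)
      · rw [← hM] at hm
        obtain ⟨s, hs, hsM⟩ := List.mem_map.mp hm
        have hmem : RTree.sh s.1 (.node ts) ∈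
            ss.attach.map (fun s => RTree.sh s.1 (.node ts)) :=
          List.mem_map.mpr ⟨s, hs, rfl⟩
        calc (M + RTree.ht (.node ts)).choose M
            = (RTree.ht s.1 + RTree.ht (.node ts)).choose (RTree.ht s.1) := by rw [hsM]
          _ ≤ RTree.sh s.1 (.node ts) := choose_le_sh_aux s.1 (.node ts)
          _ ≤ _ := by
              apply List.single_le_prod _ _ hmem
              intro x hx
              obtain ⟨s', hs', rfl⟩ := List.mem_map.mp hx
              calc 1 ≤ (RTree.ht s'.1 + RTree.ht (.node ts)).choose (RTree.ht s'.1) :=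
                    (Nat.choose_pos (Nat.le_add_right _ _))
                _ ≤ _ := choose_le_sh_aux s'.1 (.node ts)
    have key2 : (RTree.ht (.node ss) + N).choose (RTree.ht (.node ss)) ≤
        (ts.attach.map (fun t => RTree.sh (.node ss) t.1)).prod := by
      rcases foldr_max_zero_or_mem (ts.attach.map (fun t => RTree.ht t.1)) with h0 | hm
      · rw [← hN] at h0
        rw [h0, Nat.add_zero, Nat.choose_self]
        apply List.one_le_prod_of_one_le
        intro x hx
        obtain ⟨t, ht, rfl⟩ := List.mem_map.mp hx
        calc 1 ≤ (RTree.ht (.node ss) + RTree.ht t.1).choose (RTree.ht (.node ss)) :=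
              (Nat.choose_pos (Nat.le_add_right _ _))
          _ ≤ _ := choose_le_sh_aux (.node ss) t.1
      · rw [← hN] at hm
        obtain ⟨t, ht, htN⟩ := List.mem_map.mp hm
        have hmem : RTree.sh (.node ss) t.1 ∈
            ts.attach.map (fun t => RTree.sh (.node ss) t.1) :=
          List.mem_map.mpr ⟨t, ht, rfl⟩
        calc (RTree.ht (.node ss) + N).choose (RTree.ht (.node ss))
            = (RTree.ht (.node ss) + RTree.ht t.1).choose (RTree.ht (.node ss)) := by rw [htN]
          _ ≤ RTree.sh (.node ss) t.1 := choose_le_sh_aux (.node ss) t.1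
          _ ≤ _ := by
              apply List.single_le_prod _ _ hmem
              intro x hx
              obtain ⟨t', ht', rfl⟩ := List.mem_map.mp hx
              calc 1 ≤ (RTree.ht (.node ss) + RTree.ht t'.1).choose (RTree.ht (.node ss)) :=
                    (Nat.choose_pos (Nat.le_add_right _ _))
                _ ≤ _ := choose_le_sh_aux (.node ss) t'.1
    rw [hS, hT] at *
    have e1 : (M + (1 + N)).choose M = (M + N + 1).choose M := by ring_nf
    have e2 : (1 + M + N).choose (1 + M) = (M + N + 1).choose (M + 1) := by
      congr 1 <;> ring
    have e3 : (1 + M + (1 + N)).choose (1 + M) = (M + N + 1 + 1).choose (M + 1) := by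
      congr 1 <;> ring
    rw [e3, Nat.choose_succ_succ]
    rw [e1] at key1
    rw [e2] at key2
    exact Nat.add_le_add key1 key2
termination_by S T => sizeOf S + sizeOf T
decreasing_by
  all_goals simp_wf
  · have := List.sizeOf_lt_of_mem s.2
    omega
  · have := List.sizeOf_lt_of_mem s.2
    omega
  · have := List.sizeOf_lt_of_mem s'.2
    omega
  · have := List.sizeOf_lt_of_mem t.2
    omega
  · have := List.sizeOf_lt_of_mem t.2
    omega
  · have := List.sizeOf_lt_of_mem t'.2
    omega

/-- Lower bound for the number of shuffles: for all trees `S` and `T`,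
`sh(S,T) ≥ C(ht(S)+ht(T), ht(S))`. -/
theorem choose_le_sh (S T : RTree) :
    (RTree.ht S + RTree.ht T).choose (RTree.ht S) ≤ RTree.sh S T :=
  choose_le_sh_aux S T
end
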